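/- Let α be a partial action of G on X and suppose C ∼_α D (C and D are α-equi-decomposable). Then there exists a bijection φ : C → D such that for every subset A ⊆ C, A ∼_α φ(A). -/

import Mathlib

open scoped ENNReal

/-- A (set-theoretic) partial action of a group `G` on a set `X`. -/
structure SetPartialAction (G X : Type*) [Group G] where
  dom : G → Set X
  act : G → X → X
  bijOn : ∀ t : G, Set.BijOn (act t) (dom t⁻¹) (dom t)

/-- `C ∼_α D`: `C` and `D` are `α`-equi-decomposable. -/
def PartialEquidecomp {G X : Type*} [Group G] (α : SetPartialAction G X) (C D : Set X) : Prop :=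
  ∃ (n : ℕ) (t : Fin n → G) (P : Fin n → Set X),
    0 < n ∧
    (∀ i, P i ⊆ α.dom (t i)⁻¹) ∧
    (Pairwise fun i j => Disjoint (P i) (P j)) ∧
    (⋃ i, P i) = C ∧
    (Pairwise fun i j => Disjoint (α.act (t i) '' P i) (α.act (t j) '' P j)) ∧
    (⋃ i, α.act (t i) '' P i) = D

/-- If `C ∼_α D`, there is a bijection `φ : C → D` such that `A ∼_α φ(A)` for every
subset `A ⊆ C`. -/
theorem equidecomp_exists_bijection {G X : Type*} [Group G] (α : SetPartialAction G X)
    {C D : Set X} (hCD : PartialEquidecomp α C D) :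
    ∃ φ : X → X, Set.BijOn φ C D ∧ ∀ A ⊆ C, PartialEquidecomp α A (φ '' A) := by
  classical
  obtain ⟨n, t, P, hn, hdom, hPdis, hPC, hIdis, hID⟩ := hCD
  set idx : X → Fin n := fun x => if h : ∃ i, x ∈ P i then h.choose else ⟨0, hn⟩ with hidxdef
  have hidx : ∀ i, ∀ x ∈ P i, idx x = i := by
    intro i x hx
    have h : ∃ j, x ∈ P j := ⟨i, hx⟩
    have hc : x ∈ P h.choose := h.choose_spec
    by_contra hne
    simp only [hidxdef, dif_pos h] at hne
    exact (hPdis hne).le_bot ⟨hc, hx⟩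
  set φ : X → X := fun x => if x ∈ C then α.act (t (idx x)) x else x with hφdef
  have hφ : ∀ i, ∀ x ∈ P i, φ x = α.act (t i) x := by
    intro i x hx
    have hxC : x ∈ C := hPC ▸ Set.mem_iUnion.2 ⟨i, hx⟩
    simp [hφdef, hxC, hidx i x hx]
  have hmem : ∀ x ∈ C, ∃ i, x ∈ P i := by
    intro x hx
    exact Set.mem_iUnion.1 (hPC ▸ hx)
  refine ⟨φ, ⟨?_, ?_, ?_⟩, ?_⟩
  · intro x hx
    obtain ⟨i, hi⟩ := hmem x hx
    rw [hφ i x hi]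
    exact hID ▸ Set.mem_iUnion.2 ⟨i, Set.mem_image_of_mem _ hi⟩
  · intro x hx y hy hxy
    obtain ⟨i, hi⟩ := hmem x hx
    obtain ⟨j, hj⟩ := hmem y hy
    rw [hφ i x hi, hφ j y hj] at hxy
    have hij : i = j := by
      by_contra hne
      exact (hIdis hne).le_bot ⟨⟨x, hi, rfl⟩, hxy ▸ ⟨y, hj, rfl⟩⟩
    subst hij
    exact (α.bijOn (t i)).injOn (hdom i hi) (hdom i hj) hxy
  · intro y hy
    obtain ⟨i, x, hx, rfl⟩ := by
      simpa using Set.mem_iUnion.1 (hID ▸ hy : y ∈ ⋃ i, α.act (t i) '' P i)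
    exact ⟨x, hPC ▸ Set.mem_iUnion.2 ⟨i, hx⟩, hφ i x hx⟩
  · intro A hA
    refine ⟨n, t, fun i => A ∩ P i, hn, fun i => (Set.inter_subset_right).trans (hdom i),
      fun i j hij => ((hPdis hij).mono Set.inter_subset_right Set.inter_subset_right), ?_,
      fun i j hij => ((hIdis hij).mono (Set.image_mono Set.inter_subset_right)
        (Set.image_mono Set.inter_subset_right)), ?_⟩
    · rw [← Set.inter_iUnion, hPC, Set.inter_eq_left.2 hA]
    · ext y
      simp only [Set.mem_iUnion, Set.mem_image, Set.mem_inter_iff]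
      constructor
      · rintro ⟨i, x, ⟨hxA, hxP⟩, rfl⟩
        exact ⟨x, hxA, hφ i x hxP⟩
      · rintro ⟨x, hxA, rfl⟩
        obtain ⟨i, hi⟩ := hmem x (hA hxA)
        exact ⟨i, x, ⟨hxA, hi⟩, (hφ i x hi).symm⟩
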